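/- Let d ≥ 2, n ≥ 0, β an algebraic number not preperiodic under φ of degree d with canonical height ĥ_φ, and assume the Dynamical Lehmer bound ĥ_φ(α) > C/[K(α):K] for non-preperiodic α. If the polynomial φ_{n,β}(z) (whose roots are exactly φ^{-n}(β)) has degree at most d^n and splits into μ irreducible factors over K, then μ ≤ ĥ_φ(β)/C. -/

import Mathlib

/-- Under the Dynamical Lehmer bound, if the polynomial `P = φ_{n,β}` (whose
roots are exactly `φ^{-n}(β)`) has degree at most `d ^ n` and splits into `μ`
irreducible factors over `K`, then `μ ≤ ĥ_φ(β) / C`. -/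
theorem stmt6 (K : Type*) [Field K] [NumberField K] (d : ℕ) (hd : 2 ≤ d)
    (φ : AlgebraicClosure K → AlgebraicClosure K)
    (hcan : AlgebraicClosure K → ℝ)
    (hfunc : ∀ x, hcan (φ x) = d * hcan x)
    (C : ℝ) (hC : 0 < C)
    (hLehmer : ∀ α : AlgebraicClosure K, ¬(Set.range fun n : ℕ => φ^[n] α).Finite →
      C / (Module.finrank K (IntermediateField.adjoin K {α}) : ℝ) < hcan α)
    (b : K)
    (hb : ¬(Set.range fun n : ℕ =>
        φ^[n] (algebraMap K (AlgebraicClosure K) b)).Finite)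
    (n : ℕ) (P : Polynomial K) (hPdeg : P.natDegree ≤ d ^ n)
    (hProots : ∀ γ : AlgebraicClosure K,
      Polynomial.aeval γ P = 0 ↔ φ^[n] γ = algebraMap K (AlgebraicClosure K) b)
    (μ : ℕ) (hμ : 1 ≤ μ) (fs : Fin μ → Polynomial K)
    (hirr : ∀ i, Irreducible (fs i)) (hfac : P = ∏ i, fs i) :
    (μ : ℝ) ≤ hcan (algebraMap K (AlgebraicClosure K) b) / C := by
  -- iterate formula
  have hiter : ∀ (m : ℕ) (x : AlgebraicClosure K), hcan (φ^[m] x) = (d : ℝ) ^ m * hcan x := by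
    intro m
    induction m with
    | zero => intro x; simp
    | succ k ih =>
      intro x
      rw [Function.iterate_succ_apply', hfunc, ih, pow_succ]
      ring
  -- pick a minimal-degree factor
  obtain ⟨i, -, hmin⟩ := Finset.exists_min_image Finset.univ (fun j => (fs j).natDegree)
    ⟨⟨0, hμ⟩, Finset.mem_univ _⟩
  have hfsne : ∀ j, fs j ≠ 0 := fun j => (hirr j).ne_zero
  have hsum : μ * (fs i).natDegree ≤ d ^ n := by
    calc μ * (fs i).natDegree = ∑ _j : Fin μ, (fs i).natDegree := by
          simp [Finset.sum_const, mul_comm]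
      _ ≤ ∑ j : Fin μ, (fs j).natDegree :=
          Finset.sum_le_sum (fun j _ => hmin j (Finset.mem_univ j))
      _ = P.natDegree := by rw [hfac, Polynomial.natDegree_prod _ _ (fun j _ => hfsne j)]
      _ ≤ d ^ n := hPdeg
  -- find a root γ of fs i in the algebraic closure
  have hdegpos : 0 < (fs i).natDegree := (hirr i).natDegree_pos
  obtain ⟨γ, hγ⟩ := IsAlgClosed.exists_root ((fs i).map (algebraMap K (AlgebraicClosure K)))
    (by
      rw [Polynomial.degree_map]
      intro h
      rw [Polynomial.degree_eq_natDegree (hfsne i)] at h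
      exact absurd (by exact_mod_cast h) (by omega))
  have hγroot : Polynomial.aeval γ (fs i) = 0 := by
    rwa [Polynomial.aeval_def, ← Polynomial.eval_map]
  have hγP : Polynomial.aeval γ P = 0 := by
    rw [hfac]
    simp only [map_prod]
    exact Finset.prod_eq_zero (Finset.mem_univ i) hγroot
  have hγn : φ^[n] γ = algebraMap K (AlgebraicClosure K) b := (hProots γ).mp hγP
  -- γ is not preperiodic
  have hγpre : ¬(Set.range fun m : ℕ => φ^[m] γ).Finite := by
    intro hfin
    apply hb
    apply hfin.subset
    rintro _ ⟨k, rfl⟩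
    exact ⟨k + n, by show φ^[k + n] γ = _; rw [Function.iterate_add_apply, hγn]⟩
  -- degree bound on K(γ)
  have hint : IsIntegral K γ := Algebra.IsIntegral.isIntegral γ
  have hminpoly : (minpoly K γ).natDegree ≤ (fs i).natDegree :=
    Polynomial.natDegree_le_natDegree
      (Polynomial.degree_le_of_dvd (minpoly.dvd K γ hγroot) (hfsne i))
  have hfr : Module.finrank K (IntermediateField.adjoin K {γ}) = (minpoly K γ).natDegree :=
    IntermediateField.adjoin.finrank hint
  set D : ℕ := Module.finrank K (IntermediateField.adjoin K ({γ} : Set (AlgebraicClosure K)))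
  have hDpos : 0 < D := by
    rw [hfr]
    exact minpoly.natDegree_pos hint
  have hDle : μ * D ≤ d ^ n := le_trans (by
    apply Nat.mul_le_mul_left
    rw [hfr]; exact hminpoly) hsum
  -- Lehmer bound
  have hL := hLehmer γ hγpre
  have hcanγ : (d : ℝ) ^ n * hcan γ = hcan (algebraMap K (AlgebraicClosure K) b) := by
    rw [← hiter n γ, hγn]
  have hdpos : (0 : ℝ) < (d : ℝ) ^ n := by positivity
  have hDposR : (0 : ℝ) < (D : ℝ) := by exact_mod_cast hDpos
  -- C * μ ≤ C * d^n / D < d^n * hcan γ = hcan b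
  have h1 : C * μ ≤ (d : ℝ) ^ n * (C / D) := by
    rw [mul_div_assoc']
    rw [le_div_iff₀ hDposR]
    have : (μ : ℝ) * D ≤ (d : ℝ) ^ n := by
      have := hDle
      push_cast [← Nat.cast_mul]
      exact_mod_cast hDle
    nlinarith
  have h2 : (d : ℝ) ^ n * (C / D) < (d : ℝ) ^ n * hcan γ :=
    (mul_lt_mul_iff_right₀ hdpos).mpr hL
  have h3 : C * μ < hcan (algebraMap K (AlgebraicClosure K) b) := by
    calc C * μ ≤ (d : ℝ) ^ n * (C / D) := h1
      _ < (d : ℝ) ^ n * hcan γ := h2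
      _ = _ := hcanγ
  rw [le_div_iff₀ hC]
  nlinarith
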